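/- Let b : Fin n → ℕ be a monomial exponent vector that is NOT multiplicity free (some b_i ≥ 2) but with at least one index where b_i = 1. Consider ordered tuples (b_1,…,b_k) of nonzero exponent vectors with pairwise disjoint supports, summing to b, such that b_1,…,b_{k-1} are multiplicity free (all entries ≤ 1). Then the alternating count ∑_{k≥0} (-1)^{k+1} · #{such tuples of length k} equals 0. -/

import Mathlib

/-- Ordered tuples `(f 0, …, f (k-1))` of nonzero exponent vectors in `ℕ^n` with
pairwise disjoint supports, summing to `b`, in which all parts except possibly the
last one are multiplicity free (all entries `≤ 1`). -/
def TupleSet (n k : ℕ) (b : Fin n → ℕ) : Set (Fin k → Fin n → ℕ) :=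
  {f | (∀ j, f j ≠ 0) ∧
       (∀ j j', j ≠ j' → ∀ i, f j i = 0 ∨ f j' i = 0) ∧
       (∑ j, f j) = b ∧
       (∀ j : Fin k, (j : ℕ) + 1 < k → ∀ i, f j i ≤ 1)}

namespace AltCountAux

variable {n k : ℕ} {b : Fin n → ℕ}

lemma sum_apply_eq {f : Fin k → Fin n → ℕ} (hf : f ∈ TupleSet n k b) (i : Fin n) :
    ∑ j, f j i = b i := by
  have h := hf.2.2.1
  calc ∑ j, f j i = (∑ j, f j) i := (Finset.sum_apply i Finset.univ f).symm
    _ = b i := by rw [h]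

lemma support_unique {f : Fin k → Fin n → ℕ} (hf : f ∈ TupleSet n k b) {j j' : Fin k}
    {i : Fin n} (h1 : f j i ≠ 0) (h2 : f j' i ≠ 0) : j = j' := by
  by_contra hne
  rcases hf.2.1 j j' hne i with h | h <;> omega

lemma apply_le {f : Fin k → Fin n → ℕ} (hf : f ∈ TupleSet n k b) (j : Fin k) (i : Fin n) :
    f j i ≤ b i := by
  rw [← sum_apply_eq hf i]
  exact Finset.single_le_sum (f := fun j => f j i) (fun j _ => Nat.zero_le _) (Finset.mem_univ j)

lemma tupleSet_finite (n k : ℕ) (b : Fin n → ℕ) : (TupleSet n k b).Finite := by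
  have hsub : (TupleSet n k b) ⊆
      Set.pi Set.univ (fun _ : Fin k => Set.pi Set.univ (fun i => Set.Iic (b i))) := by
    intro f hf
    rw [Set.mem_univ_pi]
    intro j
    rw [Set.mem_univ_pi]
    intro i
    exact apply_le hf j i
  exact (Set.Finite.pi (fun _ => Set.Finite.pi fun i => Set.finite_Iic (b i))).subset hsub

lemma last_eq {f : Fin (k+1) → Fin n → ℕ} (hf : f ∈ TupleSet n (k+1) b) {i : Fin n}
    (hb : 2 ≤ b i) : f (Fin.last k) i = b i := by
  have hsum := sum_apply_eq hf i
  have hex : ∃ j, f j i ≠ 0 := by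
    by_contra hcon
    push_neg at hcon
    rw [Finset.sum_congr rfl (fun j _ => hcon j), Finset.sum_const_zero] at hsum
    omega
  obtain ⟨j, hj⟩ := hex
  have hone : ∑ j', f j' i = f j i :=
    Finset.sum_eq_single j
      (fun j' _ hne => by
        by_contra hcc
        exact hne (support_unique hf hcc hj))
      (fun hmem => absurd (Finset.mem_univ j) hmem)
  have hji : f j i = b i := by omega
  have hjl : j = Fin.last k := by
    by_contra hne
    have hlt : (j : ℕ) < k := by
      have h1 := j.isLt
      have h2 : (j : ℕ) ≠ k := fun hh => hne (Fin.ext (by simp [hh]))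
      omega
    have := hf.2.2.2 j (by omega) i
    omega
  rw [← hjl]; exact hji

/-- Tuples whose last part has some entry equal to `1`. -/
def Xs (n k : ℕ) (b : Fin n → ℕ) : Set (Fin (k+1) → Fin n → ℕ) :=
  {f | f ∈ TupleSet n (k+1) b ∧ ∃ i, f (Fin.last k) i = 1}

/-- Tuples whose last part has no entry equal to `1`. -/
def Ys (n k : ℕ) (b : Fin n → ℕ) : Set (Fin (k+1) → Fin n → ℕ) :=
  {f | f ∈ TupleSet n (k+1) b ∧ ¬∃ i, f (Fin.last k) i = 1}

/-- Split the last part of a tuple into its multiplicity-one entries and the rest. -/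
def spl (f : Fin (k+1) → Fin n → ℕ) : Fin (k+2) → Fin n → ℕ :=
  Fin.snoc (Fin.snoc (Fin.init f) (fun i => if f (Fin.last k) i = 1 then 1 else 0))
    (fun i => if f (Fin.last k) i = 1 then 0 else f (Fin.last k) i)

/-- Merge the last two parts of a tuple. -/
def mrg (h : Fin (k+2) → Fin n → ℕ) : Fin (k+1) → Fin n → ℕ :=
  Fin.snoc (fun j => h j.castSucc.castSucc)
    (fun i => h (Fin.last k).castSucc i + h (Fin.last (k+1)) i)

lemma spl_last_apply (f : Fin (k+1) → Fin n → ℕ) (i : Fin n) :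
    spl f (Fin.last (k+1)) i = if f (Fin.last k) i = 1 then 0 else f (Fin.last k) i := by
  simp [spl]

lemma spl_cast_last_apply (f : Fin (k+1) → Fin n → ℕ) (i : Fin n) :
    spl f (Fin.last k).castSucc i = if f (Fin.last k) i = 1 then 1 else 0 := by
  simp [spl]

lemma spl_cc_apply (f : Fin (k+1) → Fin n → ℕ) (j : Fin k) (i : Fin n) :
    spl f j.castSucc.castSucc i = f j.castSucc i := by
  simp [spl, Fin.init]

lemma mrg_last_apply (h : Fin (k+2) → Fin n → ℕ) (i : Fin n) :
    mrg h (Fin.last k) i = h (Fin.last k).castSucc i + h (Fin.last (k+1)) i := by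
  simp [mrg]

lemma mrg_cast_apply (h : Fin (k+2) → Fin n → ℕ) (j : Fin k) (i : Fin n) :
    mrg h j.castSucc i = h j.castSucc.castSucc i := by
  simp [mrg]

lemma mrg_spl (f : Fin (k+1) → Fin n → ℕ) : mrg (spl f) = f := by
  funext j
  induction j using Fin.lastCases with
  | last =>
    funext i
    rw [mrg_last_apply, spl_cast_last_apply, spl_last_apply]
    by_cases hc : f (Fin.last k) i = 1 <;> simp [hc]
  | cast j0 =>
    funext i
    rw [mrg_cast_apply, spl_cc_apply]

lemma spl_key {f : Fin (k+1) → Fin n → ℕ} (i : Fin n) (jj : Fin (k+2))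
    (hjj : spl f jj i ≠ 0) :
    (∃ j0 : Fin k, jj = j0.castSucc.castSucc ∧ f j0.castSucc i ≠ 0) ∨
    (jj = (Fin.last k).castSucc ∧ f (Fin.last k) i = 1) ∨
    (jj = Fin.last (k+1) ∧ f (Fin.last k) i ≠ 0 ∧ f (Fin.last k) i ≠ 1) := by
  induction jj using Fin.lastCases with
  | last =>
    rw [spl_last_apply] at hjj
    right; right
    refine ⟨rfl, ?_⟩
    split at hjj <;> omega
  | cast x =>
    induction x using Fin.lastCases with
    | last =>
      rw [spl_cast_last_apply] at hjj
      right; left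
      refine ⟨rfl, ?_⟩
      split at hjj <;> omega
    | cast j0 =>
      rw [spl_cc_apply] at hjj
      exact Or.inl ⟨j0, rfl, hjj⟩

lemma castSucc_castSucc_ne_cast_last (j0 : Fin k) :
    j0.castSucc.castSucc ≠ (Fin.last k).castSucc := by
  intro hcon
  have := congrArg Fin.val hcon
  simp at this
  omega

lemma castSucc_castSucc_ne_last (j0 : Fin k) :
    j0.castSucc.castSucc ≠ Fin.last (k+1) := by
  intro hcon
  have := congrArg Fin.val hcon
  simp at this
  omega

lemma spl_mem (hNMF : ∃ i, 2 ≤ b i) {f : Fin (k+1) → Fin n → ℕ}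
    (hf : f ∈ Xs n k b) : spl f ∈ Ys n (k+1) b := by
  obtain ⟨htup, i1, hi1⟩ := hf
  obtain ⟨hnz, hdisj, hsum, hmf⟩ := htup
  have htup : f ∈ TupleSet n (k+1) b := ⟨hnz, hdisj, hsum, hmf⟩
  obtain ⟨i2, hi2⟩ := hNMF
  have hfl : f (Fin.last k) i2 = b i2 := last_eq htup hi2
  refine ⟨⟨?_, ?_, ?_, ?_⟩, ?_⟩
  · -- nonzero parts
    intro j
    induction j using Fin.lastCases with
    | last =>
      intro h0
      have hh := congrFun h0 i2
      rw [spl_last_apply] at hh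
      simp only [Pi.zero_apply] at hh
      split at hh <;> omega
    | cast x =>
      induction x using Fin.lastCases with
      | last =>
        intro h0
        have hh := congrFun h0 i1
        rw [spl_cast_last_apply] at hh
        simp [hi1] at hh
      | cast j0 =>
        intro h0
        apply hnz j0.castSucc
        funext i
        have hh := congrFun h0 i
        rw [spl_cc_apply] at hh
        exact hh
  · -- disjoint supports
    intro j j' hne i
    by_contra hcon
    push_neg at hcon
    obtain ⟨h1, h2⟩ := hcon
    apply hne
    rcases spl_key i j h1 with hA | hA | hA
    · obtain ⟨j0, rfl, hj0⟩ := hA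
      rcases spl_key i j' h2 with hB | hB | hB
      · obtain ⟨j0', rfl, hj0'⟩ := hB
        rw [Fin.castSucc_inj.mp (support_unique htup hj0 hj0')]
      · obtain ⟨rfl, hg'⟩ := hB
        exact absurd (support_unique htup hj0 (show f (Fin.last k) i ≠ 0 by omega))
          (Fin.castSucc_lt_last j0).ne
      · obtain ⟨rfl, hg1', hg2'⟩ := hB
        exact absurd (support_unique htup hj0 hg1') (Fin.castSucc_lt_last j0).ne
    · obtain ⟨rfl, hg⟩ := hA
      rcases spl_key i j' h2 with hB | hB | hB
      · obtain ⟨j0', rfl, hj0'⟩ := hB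
        exact absurd (support_unique htup hj0' (show f (Fin.last k) i ≠ 0 by omega))
          (Fin.castSucc_lt_last j0').ne
      · obtain ⟨rfl, hg'⟩ := hB
        rfl
      · obtain ⟨rfl, hg1', hg2'⟩ := hB
        omega
    · obtain ⟨rfl, hg1, hg2⟩ := hA
      rcases spl_key i j' h2 with hB | hB | hB
      · obtain ⟨j0', rfl, hj0'⟩ := hB
        exact absurd (support_unique htup hj0' hg1) (Fin.castSucc_lt_last j0').ne
      · obtain ⟨rfl, hg'⟩ := hB
        omega
      · obtain ⟨rfl, hg1', hg2'⟩ := hB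
        rfl
  · -- sum
    funext i
    rw [Finset.sum_apply, Fin.sum_univ_castSucc, Fin.sum_univ_castSucc]
    have hrw : ∀ j0 : Fin k, spl f j0.castSucc.castSucc i = f j0.castSucc i :=
      fun j0 => spl_cc_apply f j0 i
    rw [Finset.sum_congr rfl (fun j0 _ => hrw j0), spl_cast_last_apply, spl_last_apply]
    have hb : b i = ∑ j, f j i := (sum_apply_eq htup i).symm
    rw [hb, Fin.sum_univ_castSucc]
    by_cases hc : f (Fin.last k) i = 1 <;> simp [hc]
  · -- multiplicity free except last
    intro j hj i
    have hjk : (j : ℕ) < k + 1 := by omega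
    obtain ⟨x, rfl⟩ : ∃ x : Fin (k+1), j = x.castSucc :=
      ⟨⟨(j : ℕ), hjk⟩, by ext; simp⟩
    clear hj
    induction x using Fin.lastCases with
    | last =>
      rw [spl_cast_last_apply]
      split <;> omega
    | cast j0 =>
      rw [spl_cc_apply]
      exact hmf j0.castSucc (by simp) i
  · -- last part has no entry 1
    rintro ⟨i, hi⟩
    rw [spl_last_apply] at hi
    split at hi <;> omega

lemma mrg_key {h : Fin (k+2) → Fin n → ℕ} (i : Fin n) (jj : Fin (k+1))
    (hjj : mrg h jj i ≠ 0) :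
    (jj = Fin.last k ∧ (h (Fin.last k).castSucc i ≠ 0 ∨ h (Fin.last (k+1)) i ≠ 0)) ∨
    (∃ j0 : Fin k, jj = j0.castSucc ∧ h j0.castSucc.castSucc i ≠ 0) := by
  induction jj using Fin.lastCases with
  | last =>
    rw [mrg_last_apply] at hjj
    exact Or.inl ⟨rfl, by omega⟩
  | cast j0 =>
    rw [mrg_cast_apply] at hjj
    exact Or.inr ⟨j0, rfl, hjj⟩

lemma mrg_mem {h : Fin (k+2) → Fin n → ℕ} (hh : h ∈ Ys n (k+1) b) : mrg h ∈ Xs n k b := by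
  obtain ⟨htup, hno⟩ := hh
  obtain ⟨hnz, hdisj, hsum, hmf⟩ := htup
  have htup : h ∈ TupleSet n (k+2) b := ⟨hnz, hdisj, hsum, hmf⟩
  have hple : ∀ i, h (Fin.last k).castSucc i ≤ 1 :=
    fun i => hmf (Fin.last k).castSucc (by simp) i
  have hpq : ∀ i, h (Fin.last k).castSucc i = 0 ∨ h (Fin.last (k+1)) i = 0 :=
    hdisj _ _ (Fin.castSucc_lt_last _).ne
  refine ⟨⟨?_, ?_, ?_, ?_⟩, ?_⟩
  · -- nonzero parts
    intro j
    induction j using Fin.lastCases with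
    | last =>
      intro h0
      obtain ⟨i, hi⟩ := Function.ne_iff.mp (hnz (Fin.last k).castSucc)
      have hi' : h (Fin.last k).castSucc i ≠ 0 := by simpa using hi
      have hh := congrFun h0 i
      rw [mrg_last_apply] at hh
      simp only [Pi.zero_apply] at hh
      omega
    | cast j0 =>
      intro h0
      apply hnz j0.castSucc.castSucc
      funext i
      have hh := congrFun h0 i
      rw [mrg_cast_apply] at hh
      exact hh
  · -- disjoint supports
    intro j j' hne i
    by_contra hcon
    push_neg at hcon
    obtain ⟨h1, h2⟩ := hcon
    apply hne
    rcases mrg_key i j h1 with ⟨rfl, hg⟩ | ⟨j0, rfl, hj0⟩ <;>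
      rcases mrg_key i j' h2 with ⟨rfl, hg'⟩ | ⟨j0', rfl, hj0'⟩
    · rfl
    · exfalso
      rcases hg with hg | hg
      · exact castSucc_castSucc_ne_cast_last j0' (support_unique htup hj0' hg)
      · exact castSucc_castSucc_ne_last j0' (support_unique htup hj0' hg)
    · exfalso
      rcases hg' with hg' | hg'
      · exact castSucc_castSucc_ne_cast_last j0 (support_unique htup hj0 hg')
      · exact castSucc_castSucc_ne_last j0 (support_unique htup hj0 hg')
    · have heq := support_unique htup hj0 hj0'
      rw [Fin.castSucc_inj.mp (Fin.castSucc_inj.mp heq)]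
  · -- sum
    funext i
    rw [Finset.sum_apply, Fin.sum_univ_castSucc]
    have hrw : ∀ j0 : Fin k, mrg h j0.castSucc i = h j0.castSucc.castSucc i :=
      fun j0 => mrg_cast_apply h j0 i
    rw [Finset.sum_congr rfl (fun j0 _ => hrw j0), mrg_last_apply]
    have hb : b i = ∑ j, h j i := (sum_apply_eq htup i).symm
    rw [hb, Fin.sum_univ_castSucc, Fin.sum_univ_castSucc]
    ring
  · -- multiplicity free except last
    intro j hj i
    have hjk : (j : ℕ) < k := by omega
    obtain ⟨j0, rfl⟩ : ∃ j0 : Fin k, j = j0.castSucc := ⟨⟨(j : ℕ), hjk⟩, by ext; simp⟩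
    rw [mrg_cast_apply]
    exact hmf j0.castSucc.castSucc (by have h2 := j0.isLt; simp only [Fin.coe_castSucc]; omega) i
  · -- last part has an entry 1
    obtain ⟨i, hi⟩ := Function.ne_iff.mp (hnz (Fin.last k).castSucc)
    have hi' : h (Fin.last k).castSucc i ≠ 0 := by simpa using hi
    refine ⟨i, ?_⟩
    rw [mrg_last_apply]
    have := hple i
    rcases hpq i with h0 | h0 <;> omega

lemma spl_mrg {h : Fin (k+2) → Fin n → ℕ} (hh : h ∈ Ys n (k+1) b) : spl (mrg h) = h := by
  obtain ⟨htup, hno⟩ := hh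
  obtain ⟨hnz, hdisj, hsum, hmf⟩ := htup
  push_neg at hno
  have hple : ∀ i, h (Fin.last k).castSucc i ≤ 1 :=
    fun i => hmf (Fin.last k).castSucc (by simp) i
  have hpq : ∀ i, h (Fin.last k).castSucc i = 0 ∨ h (Fin.last (k+1)) i = 0 :=
    hdisj _ _ (Fin.castSucc_lt_last _).ne
  funext j
  induction j using Fin.lastCases with
  | last =>
    funext i
    rw [spl_last_apply, mrg_last_apply]
    have h1 := hple i
    have h2 := hno i
    rcases hpq i with h0 | h0 <;> split <;> omega
  | cast x =>
    induction x using Fin.lastCases with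
    | last =>
      funext i
      rw [spl_cast_last_apply, mrg_last_apply]
      have h1 := hple i
      have h2 := hno i
      rcases hpq i with h0 | h0 <;> split <;> omega
    | cast j0 =>
      funext i
      rw [spl_cc_apply, mrg_cast_apply]

lemma Xs_finite (n k : ℕ) (b : Fin n → ℕ) : (Xs n k b).Finite :=
  (tupleSet_finite n (k+1) b).subset (fun _ hf => hf.1)

lemma Ys_finite (n k : ℕ) (b : Fin n → ℕ) : (Ys n k b).Finite :=
  (tupleSet_finite n (k+1) b).subset (fun _ hf => hf.1)

lemma card_split (n k : ℕ) (b : Fin n → ℕ) :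
    (TupleSet n (k+1) b).ncard = (Xs n k b).ncard + (Ys n k b).ncard := by
  have hU : TupleSet n (k+1) b = Xs n k b ∪ Ys n k b := by
    ext f
    constructor
    · intro hf
      by_cases hx : ∃ i, f (Fin.last k) i = 1
      · exact Or.inl ⟨hf, hx⟩
      · exact Or.inr ⟨hf, hx⟩
    · rintro (hf | hf) <;> exact hf.1
  rw [hU]
  exact Set.ncard_union_eq
    (by
      rw [Set.disjoint_left]
      rintro f ⟨_, hx⟩ ⟨_, hy⟩
      exact hy hx)
    (Xs_finite n k b) (Ys_finite n k b)

lemma card_step (hNMF : ∃ i, 2 ≤ b i) (k : ℕ) :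
    (Ys n (k+1) b).ncard = (Xs n k b).ncard := by
  have himg : Xs n k b = mrg '' Ys n (k+1) b := by
    ext f
    constructor
    · intro hf
      exact ⟨spl f, spl_mem hNMF hf, mrg_spl f⟩
    · rintro ⟨h, hh, rfl⟩
      exact mrg_mem hh
  rw [himg]
  exact (Set.ncard_image_of_injOn (fun h1 h1m h2 h2m he => by
    rw [← spl_mrg h1m, ← spl_mrg h2m, he])).symm

lemma Ys_zero (hhat : ∃ i, b i = 1) : (Ys n 0 b).ncard = 0 := by
  have hempty : Ys n 0 b = ∅ := by
    rw [Set.eq_empty_iff_forall_notMem]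
    rintro f ⟨⟨hnz, hdisj, hsum, hmf⟩, hno⟩
    apply hno
    obtain ⟨i, hi⟩ := hhat
    refine ⟨i, ?_⟩
    have hf0 : f (Fin.last 0) = b := by
      rw [← hsum]
      have : Fin.last 0 = 0 := rfl
      rw [this, Fin.sum_univ_one]
    rw [hf0, hi]
  rw [hempty, Set.ncard_empty]

lemma Xs_top {m : ℕ} {b : Fin (m+1) → ℕ} (hNMF : ∃ i, 2 ≤ b i) :
    (Xs (m+1) m b).ncard = 0 := by
  have hempty : Xs (m+1) m b = ∅ := by
    rw [Set.eq_empty_iff_forall_notMem]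
    rintro f ⟨htup, i1, hi1⟩
    obtain ⟨i2, hi2⟩ := hNMF
    have hfl : f (Fin.last m) i2 = b i2 := last_eq htup hi2
    have hne12 : i1 ≠ i2 := by
      intro hcon
      rw [hcon] at hi1
      omega
    set S : Fin (m+1) → Finset (Fin (m+1)) :=
      fun j => Finset.univ.filter (fun i => f j i ≠ 0) with hS
    have hmemS : ∀ j i, i ∈ S j ↔ f j i ≠ 0 := by
      intro j i
      simp [hS]
    have hcard : ∑ j, (S j).card = (Finset.univ.biUnion S).card := by
      refine (Finset.card_biUnion ?_).symm
      intro j _ j' _ hne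
      rw [Function.onFun, Finset.disjoint_left]
      intro i hij hij'
      rw [hmemS] at hij hij'
      exact hne (support_unique htup hij hij')
    have hle : (Finset.univ.biUnion S).card ≤ m + 1 := by
      simpa using Finset.card_le_univ (Finset.univ.biUnion S)
    have h1 : ∀ j, 1 ≤ (S j).card := by
      intro j
      obtain ⟨i, hi⟩ := Function.ne_iff.mp (htup.1 j)
      have hi' : f j i ≠ 0 := by simpa using hi
      refine Finset.card_pos.mpr ⟨i, ?_⟩
      rw [hmemS]
      exact hi'
    have h2 : 2 ≤ (S (Fin.last m)).card := by
      have hsub : ({i1, i2} : Finset (Fin (m+1))) ⊆ S (Fin.last m) := by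
        intro i hi
        rw [Finset.mem_insert, Finset.mem_singleton] at hi
        rw [hmemS]
        rcases hi with rfl | rfl <;> omega
      calc 2 = ({i1, i2} : Finset (Fin (m+1))).card := (Finset.card_pair hne12).symm
        _ ≤ (S (Fin.last m)).card := Finset.card_le_card hsub
    have hsplit : ∑ j ∈ Finset.univ.erase (Fin.last m), (S j).card + (S (Fin.last m)).card
        = ∑ j, (S j).card := Finset.sum_erase_add _ _ (Finset.mem_univ _)
    have herase : m ≤ ∑ j ∈ Finset.univ.erase (Fin.last m), (S j).card := by
      calc m = (Finset.univ.erase (Fin.last m)).card := by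
            rw [Finset.card_erase_of_mem (Finset.mem_univ _), Finset.card_univ,
              Fintype.card_fin]
            omega
        _ = ∑ _j ∈ Finset.univ.erase (Fin.last m), 1 := by
            rw [Finset.sum_const, smul_eq_mul, mul_one]
        _ ≤ ∑ j ∈ Finset.univ.erase (Fin.last m), (S j).card :=
            Finset.sum_le_sum (fun j _ => h1 j)
    omega
  rw [hempty, Set.ncard_empty]

lemma telescope (A C : ℕ → ℤ) (hC0 : C 0 = 0) (hC : ∀ k, C (k+1) = A k) (m : ℕ) :
    ∑ k ∈ Finset.range (m+1), (-1 : ℤ) ^ (k+2) * (A k + C k) = (-1) ^ m * A m := by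
  induction m with
  | zero => simp [hC0]
  | succ m ih =>
    rw [Finset.sum_range_succ, ih, hC]
    ring

end AltCountAux

open AltCountAux

/-- If `b` is not multiplicity free (some entry `≥ 2`) but has at least one entry equal
to `1`, then the alternating count of ordered tuples of nonzero exponent vectors with
pairwise disjoint supports summing to `b`, all but the last multiplicity free, is `0`. -/
theorem alternating_count_NMF_zero (n : ℕ) (b : Fin n → ℕ)
    (hNMF : ∃ i, 2 ≤ b i) (hhat : ∃ i, b i = 1) :
    ∑ k ∈ Finset.range (n + 1), (-1 : ℤ) ^ (k + 1) * Nat.card (TupleSet n k b) = 0 := by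
  rcases n with _ | m
  · obtain ⟨i, _⟩ := hNMF
    exact i.elim0
  · have hT0 : Nat.card (TupleSet (m+1) 0 b) = 0 := by
      have hempty : TupleSet (m+1) 0 b = ∅ := by
        rw [Set.eq_empty_iff_forall_notMem]
        rintro f ⟨_, _, hsum, _⟩
        obtain ⟨i2, hi2⟩ := hNMF
        have hcf := congrFun hsum i2
        simp at hcf
        omega
      rw [hempty]
      simp
    rw [Finset.sum_range_succ']
    rw [hT0]
    have hstep : ∀ k ∈ Finset.range (m+1),
        (-1 : ℤ) ^ (k + 1 + 1) * Nat.card (TupleSet (m+1) (k+1) b)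
          = (-1 : ℤ) ^ (k + 2) *
            (((Xs (m+1) k b).ncard : ℤ) + ((Ys (m+1) k b).ncard : ℤ)) := by
      intro k _
      rw [Nat.card_coe_set_eq, card_split]
      push_cast
      ring
    rw [Finset.sum_congr rfl hstep,
      telescope (fun k => ((Xs (m+1) k b).ncard : ℤ)) (fun k => ((Ys (m+1) k b).ncard : ℤ))
        (show ((Ys (m+1) 0 b).ncard : ℤ) = 0 by rw [Ys_zero hhat]; norm_num)
        (fun k => show ((Ys (m+1) (k+1) b).ncard : ℤ) = ((Xs (m+1) k b).ncard : ℤ) by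
          rw [card_step hNMF k]) m]
    rw [Xs_top hNMF]
    simp
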